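/- Let S ⊆ Γ* × Γ* be a standard semi-Thue system (no rule with empty left side, 2 ≤ m(S) = sup |ℓ| < ∞) with |r| ≤ |ℓ| for all rules, and let C(S) be a relation on cyclic words containing the cyclic one-step rewriting of S and contained in conjugacy of Γ*/S, where Γ*/S is a group. If C(S) is confluent on all cyclic words, then two words u, v are conjugate in Γ*/S if and only if there is a cyclic word t with u∼ →*_{C(S)} t ←*_{C(S)} v∼. -/

import Mathlib

/-- One-step rewriting relation of a semi-Thue system `S`. -/
def SemiThueStep {Γ : Type*} (S : Set (List Γ × List Γ)) (u v : List Γ) : Prop :=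
  ∃ (p q l r : List Γ), (l, r) ∈ S ∧ u = p ++ l ++ q ∧ v = p ++ r ++ q

/-- Transposition: `u ∼ v` iff they are cyclic permutations of one another. -/
def Transp {Γ : Type*} (u v : List Γ) : Prop :=
  ∃ x y : List Γ, u = x ++ y ∧ v = y ++ x

/-- One-step rewriting of `S` on cyclic words (on representatives). -/
def CycStep {Γ : Type*} (S : Set (List Γ × List Γ)) (u v : List Γ) : Prop :=
  ∃ u' v', Transp u u' ∧ SemiThueStep S u' v' ∧ Transp v' v

/-- Conjugacy of the words `u` and `v` in the quotient monoid `Γ*/S`. -/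
def ThueConj {Γ : Type*} (S : Set (List Γ × List Γ)) (u v : List Γ) : Prop :=
  ∃ x y : List Γ, Relation.EqvGen (SemiThueStep S) (x ++ y) [] ∧
    Relation.EqvGen (SemiThueStep S) (x ++ u ++ y) v

section Aux
variable {Γ : Type*} (S : Set (List Γ × List Γ))

theorem step_appL {u v : List Γ} (w : List Γ) (h : SemiThueStep S u v) :
    SemiThueStep S (w ++ u) (w ++ v) := by
  obtain ⟨p, q, l, r, hS, hu, hv⟩ := h
  exact ⟨w ++ p, q, l, r, hS, by simp [hu, List.append_assoc],
    by simp [hv, List.append_assoc]⟩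

theorem step_appR {u v : List Γ} (w : List Γ) (h : SemiThueStep S u v) :
    SemiThueStep S (u ++ w) (v ++ w) := by
  obtain ⟨p, q, l, r, hS, hu, hv⟩ := h
  exact ⟨p, q ++ w, l, r, hS, by simp [hu, List.append_assoc],
    by simp [hv, List.append_assoc]⟩

theorem eqv_appL {u v : List Γ} (w : List Γ)
    (h : Relation.EqvGen (SemiThueStep S) u v) :
    Relation.EqvGen (SemiThueStep S) (w ++ u) (w ++ v) := by
  induction h with
  | rel a b h => exact .rel _ _ (step_appL S w h)
  | refl a => exact .refl _
  | symm a b _ ih => exact .symm _ _ ih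
  | trans a b c _ _ ih1 ih2 => exact .trans _ _ _ ih1 ih2

theorem eqv_appR {u v : List Γ} (w : List Γ)
    (h : Relation.EqvGen (SemiThueStep S) u v) :
    Relation.EqvGen (SemiThueStep S) (u ++ w) (v ++ w) := by
  induction h with
  | rel a b h => exact .rel _ _ (step_appR S w h)
  | refl a => exact .refl _
  | symm a b _ ih => exact .symm _ _ ih
  | trans a b c _ _ ih1 ih2 => exact .trans _ _ _ ih1 ih2

theorem transp_refl (u : List Γ) : Transp u u := ⟨u, [], by simp, by simp⟩

end Aux

section Aux2
variable {Γ : Type*} (S : Set (List Γ × List Γ))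

theorem church_rosser
    (hconf : ∀ x y z, Relation.ReflTransGen (SemiThueStep S) x y →
      Relation.ReflTransGen (SemiThueStep S) x z →
      ∃ w, Relation.ReflTransGen (SemiThueStep S) y w ∧
           Relation.ReflTransGen (SemiThueStep S) z w)
    {u v : List Γ} (h : Relation.EqvGen (SemiThueStep S) u v) :
    ∃ w, Relation.ReflTransGen (SemiThueStep S) u w ∧
         Relation.ReflTransGen (SemiThueStep S) v w := by
  induction h with
  | rel a b h => exact ⟨b, .single h, .refl⟩
  | refl a => exact ⟨a, .refl, .refl⟩
  | symm a b _ ih => obtain ⟨w, h1, h2⟩ := ih; exact ⟨w, h2, h1⟩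
  | trans a b c _ _ ih1 ih2 =>
      obtain ⟨w1, h1, h2⟩ := ih1
      obtain ⟨w2, h3, h4⟩ := ih2
      obtain ⟨w, hw1, hw2⟩ := hconf b w1 w2 h2 h3
      exact ⟨w, h1.trans hw1, h4.trans hw2⟩

theorem inv_comm
    (hgroup : ∀ u : List Γ, ∃ v : List Γ,
      Relation.EqvGen (SemiThueStep S) (u ++ v) [] ∧
      Relation.EqvGen (SemiThueStep S) (v ++ u) [])
    {x y : List Γ} (h : Relation.EqvGen (SemiThueStep S) (x ++ y) []) :
    Relation.EqvGen (SemiThueStep S) (y ++ x) [] := by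
  obtain ⟨x', hx1, hx2⟩ := hgroup x
  -- y ≡ x' : since y = [] ++ y ≡ (x' ++ x) ++ y = x' ++ (x ++ y) ≡ x' ++ [] = x'
  have h1 : Relation.EqvGen (SemiThueStep S) ((x' ++ x) ++ y) ([] ++ y) :=
    eqv_appR S y hx2
  have h2 : Relation.EqvGen (SemiThueStep S) (x' ++ (x ++ y)) (x' ++ []) :=
    eqv_appL S x' h
  have h3 : Relation.EqvGen (SemiThueStep S) y x' := by
    have := (Relation.EqvGen.symm _ _ h1).trans _ _ _ (by
      rw [List.append_assoc]
      simpa using h2)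
    simpa using this
  have h4 : Relation.EqvGen (SemiThueStep S) (y ++ x) (x' ++ x) :=
    eqv_appR S x h3
  exact h4.trans _ _ _ hx2

theorem conj_refl (u : List Γ) : ThueConj S u u :=
  ⟨[], [], .refl _, by simpa using Relation.EqvGen.refl u⟩

theorem conj_trans {u v w : List Γ} (h1 : ThueConj S u v) (h2 : ThueConj S v w) :
    ThueConj S u w := by
  obtain ⟨x, y, hxy, hc1⟩ := h1
  obtain ⟨a, b, hab, hc2⟩ := h2
  refine ⟨a ++ x, y ++ b, ?_, ?_⟩
  · have h3 : Relation.EqvGen (SemiThueStep S) (a ++ ((x ++ y) ++ b)) (a ++ ([] ++ b)) :=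
      eqv_appL S a (eqv_appR S b hxy)
    have h4 : Relation.EqvGen (SemiThueStep S) ((a ++ x) ++ (y ++ b)) (a ++ b) := by
      simpa [List.append_assoc] using h3
    exact h4.trans _ _ _ hab
  · have h3 : Relation.EqvGen (SemiThueStep S) (a ++ ((x ++ u ++ y) ++ b)) (a ++ (v ++ b)) :=
      eqv_appL S a (eqv_appR S b hc1)
    have h4 : Relation.EqvGen (SemiThueStep S) ((a ++ x) ++ u ++ (y ++ b)) (a ++ v ++ b) := by
      simpa [List.append_assoc] using h3
    exact h4.trans _ _ _ hc2

theorem conj_symm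
    (hgroup : ∀ u : List Γ, ∃ v : List Γ,
      Relation.EqvGen (SemiThueStep S) (u ++ v) [] ∧
      Relation.EqvGen (SemiThueStep S) (v ++ u) [])
    {u v : List Γ} (h : ThueConj S u v) : ThueConj S v u := by
  obtain ⟨x, y, hxy, hc⟩ := h
  have hyx : Relation.EqvGen (SemiThueStep S) (y ++ x) [] := inv_comm S hgroup hxy
  refine ⟨y, x, hyx, ?_⟩
  -- y ++ v ++ x ≡ y ++ (x ++ u ++ y) ++ x = (y++x) ++ u ++ (y++x) ≡ u
  have h1 : Relation.EqvGen (SemiThueStep S) (y ++ (x ++ u ++ y) ++ x) (y ++ v ++ x) :=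
    eqv_appR S x (eqv_appL S y hc)
  have h2 : Relation.EqvGen (SemiThueStep S) ((y ++ x) ++ (u ++ ((y ++ x)))) ([] ++ (u ++ [])) := by
    refine Relation.EqvGen.trans _ _ _ (eqv_appR S _ hyx) ?_
    exact eqv_appL S [] (eqv_appL S u hyx)
  have h3 : Relation.EqvGen (SemiThueStep S) (y ++ (x ++ u ++ y) ++ x) u := by
    have := h2
    simp only [List.append_assoc, List.nil_append, List.append_nil] at this ⊢
    exact this
  exact (Relation.EqvGen.symm _ _ h1).trans _ _ _ h3

end Aux2

section Aux3
variable {Γ : Type*} (S : Set (List Γ × List Γ))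

theorem conj_transp
    (hgroup : ∀ u : List Γ, ∃ v : List Γ,
      Relation.EqvGen (SemiThueStep S) (u ++ v) [] ∧
      Relation.EqvGen (SemiThueStep S) (v ++ u) [])
    {u v : List Γ} (h : Transp u v) : ThueConj S u v := by
  obtain ⟨p, q, hu, hv⟩ := h
  obtain ⟨q', hq1, _⟩ := hgroup q
  refine ⟨q, q', hq1, ?_⟩
  -- q ++ (p ++ q) ++ q' = (q ++ p) ++ (q ++ q') ≡ (q ++ p) ++ [] = v
  have h1 : Relation.EqvGen (SemiThueStep S) ((q ++ p) ++ (q ++ q')) ((q ++ p) ++ []) :=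
    eqv_appL S (q ++ p) hq1
  subst hu hv
  simp only [List.append_assoc, List.append_nil] at h1 ⊢
  exact h1

theorem conj_of_rtc
    (hgroup : ∀ u : List Γ, ∃ v : List Γ,
      Relation.EqvGen (SemiThueStep S) (u ++ v) [] ∧
      Relation.EqvGen (SemiThueStep S) (v ++ u) [])
    {C : List Γ → List Γ → Prop}
    (hC2 : ∀ u v, C u v → ThueConj S u v)
    {u t : List Γ}
    (h : Relation.ReflTransGen (fun a b => C a b ∨ Transp a b) u t) :
    ThueConj S u t := by
  induction h with
  | refl => exact conj_refl S u
  | tail _ hstep ih =>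
      refine conj_trans S ih ?_
      rcases hstep with h | h
      · exact hC2 _ _ h
      · exact conj_transp S hgroup h

theorem rtc_lift {C : List Γ → List Γ → Prop}
    (hC1 : ∀ u v, CycStep S u v → C u v)
    {u v : List Γ} (h : Relation.ReflTransGen (SemiThueStep S) u v) :
    Relation.ReflTransGen (fun a b => C a b ∨ Transp a b) u v :=
  Relation.ReflTransGen.mono (fun a b hab => Or.inl (hC1 a b ⟨a, b, transp_refl a, hab, transp_refl b⟩)) _ _ h

end Aux3

/-- If `S` is a standard confluent semi-Thue system with non-length-increasing
rules whose quotient `Γ*/S` is a group, and `C` is a relation on cyclic words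
satisfying (C1) and (C2) which is confluent on all cyclic words, then two words
are conjugate in `Γ*/S` iff they have a common descendant under
`→_C ∪ ∼` (the reflexive-on-cyclic-words closure of `C`). -/
theorem conjugate_iff_common_descendant {Γ : Type*}
    (S : Set (List Γ × List Γ)) (C : List Γ → List Γ → Prop)
    -- S standard: no empty left-hand sides, 2 ≤ m(S) < ∞
    (hstd1 : ∀ r : List Γ, ([], r) ∉ S)
    (hstd2 : ∃ l r : List Γ, (l, r) ∈ S ∧ 2 ≤ l.length)
    (hstd3 : ∃ N : ℕ, ∀ l r : List Γ, (l, r) ∈ S → l.length ≤ N)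
    -- no length-increasing rules
    (hlen : ∀ l r : List Γ, (l, r) ∈ S → r.length ≤ l.length)
    -- S confluent
    (hconf : ∀ x y z, Relation.ReflTransGen (SemiThueStep S) x y →
      Relation.ReflTransGen (SemiThueStep S) x z →
      ∃ w, Relation.ReflTransGen (SemiThueStep S) y w ∧
           Relation.ReflTransGen (SemiThueStep S) z w)
    -- Γ*/S is a group
    (hgroup : ∀ u : List Γ, ∃ v : List Γ,
      Relation.EqvGen (SemiThueStep S) (u ++ v) [] ∧
      Relation.EqvGen (SemiThueStep S) (v ++ u) [])
    -- C is a relation on cyclic words (invariant under transposition)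
    (hCcyc : ∀ u u' v v', Transp u u' → Transp v v' → C u v → C u' v')
    -- (C1): the cyclic one-step rewriting of S is contained in C
    (hC1 : ∀ u v, CycStep S u v → C u v)
    -- (C2): C-related words are conjugate in Γ*/S
    (hC2 : ∀ u v, C u v → ThueConj S u v)
    -- C is confluent on all cyclic words
    (hCconf : ∀ x y z,
      Relation.ReflTransGen (fun a b => C a b ∨ Transp a b) x y →
      Relation.ReflTransGen (fun a b => C a b ∨ Transp a b) x z →
      ∃ w, Relation.ReflTransGen (fun a b => C a b ∨ Transp a b) y w ∧
           Relation.ReflTransGen (fun a b => C a b ∨ Transp a b) z w) :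
    ∀ u v : List Γ, ThueConj S u v ↔
      ∃ t, Relation.ReflTransGen (fun a b => C a b ∨ Transp a b) u t ∧
           Relation.ReflTransGen (fun a b => C a b ∨ Transp a b) v t := by
  intro u v
  constructor
  · rintro ⟨x, y, hxy, hc⟩
    have hyx : Relation.EqvGen (SemiThueStep S) (y ++ x) [] := inv_comm S hgroup hxy
    -- (y ++ x) ++ u ≡ [] ++ u = u
    have h2 : Relation.EqvGen (SemiThueStep S) (y ++ x ++ u) u := by
      simpa using eqv_appR S u hyx
    obtain ⟨w, hw1, hw2⟩ := church_rosser S hconf h2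
    obtain ⟨w', hw1', hw2'⟩ := church_rosser S hconf hc
    -- transposition step from x ++ u ++ y to y ++ x ++ u
    have tstep : (fun a b => C a b ∨ Transp a b) (x ++ u ++ y) (y ++ x ++ u) :=
      Or.inr ⟨x ++ u, y, rfl, by simp [List.append_assoc]⟩
    have hA : Relation.ReflTransGen (fun a b => C a b ∨ Transp a b) (x ++ u ++ y) w :=
      Relation.ReflTransGen.head tstep (rtc_lift S hC1 hw1)
    have hB : Relation.ReflTransGen (fun a b => C a b ∨ Transp a b) (x ++ u ++ y) w' :=
      rtc_lift S hC1 hw1'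
    obtain ⟨t, ht1, ht2⟩ := hCconf _ _ _ hA hB
    exact ⟨t, (rtc_lift S hC1 hw2).trans ht1, (rtc_lift S hC1 hw2').trans ht2⟩
  · rintro ⟨t, h1, h2⟩
    exact conj_trans S (conj_of_rtc S hgroup hC2 h1)
      (conj_symm S hgroup (conj_of_rtc S hgroup hC2 h2))
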